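/- Let M be a metric space and let N be a subset of M which is a local retract of M. If N (with the induced metric) is a proper metric space, then N is a 1-Lipschitz retract of M, i.e. there exists a 1-Lipschitz map R : M → N with R(x) = x for every x ∈ N. -/

import Mathlib

open Filter

/-- A subset `N` of a metric space `M` is a local retract of `M` if for every finite
subset `E` of `M` and every `ε > 0` there exists a `(1+ε)`-Lipschitz map `r : E → N`
fixing every point of `E ∩ N`. -/
def IsLocalRetract {M : Type*} [MetricSpace M] (N : Set M) : Prop :=
  ∀ E : Finset M, ∀ ε : ℝ, 0 < ε →
    ∃ r : M → M, (∀ x ∈ E, r x ∈ N) ∧ (∀ e ∈ E, e ∈ N → r e = e) ∧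
      ∀ x ∈ E, ∀ y ∈ E, dist (r x) (r y) ≤ (1 + ε) * dist x y

theorem stmt2 {M : Type*} [MetricSpace M] (N : Set M) (hN : IsLocalRetract N)
    (hproper : ProperSpace N) :
    ∃ R : M → M, (∀ x : M, R x ∈ N) ∧ (∀ x ∈ N, R x = x) ∧
      ∀ x y : M, dist (R x) (R y) ≤ dist x y := by
  classical
  rcases isEmpty_or_nonempty M with hM | ⟨⟨m⟩⟩
  · exact ⟨id, fun x => isEmptyElim x, fun x _ => rfl, fun x _ => isEmptyElim x⟩
  -- get a base point of N
  obtain ⟨r₀, hr₀, -, -⟩ := hN {m} 1 one_pos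
  set n0 : M := r₀ m with hn0def
  have hn0 : n0 ∈ N := hr₀ m (Finset.mem_singleton_self m)
  -- choose approximate retractions
  choose r hr1 hr2 hr3 using fun i : Finset M × ℕ =>
    hN i.1 (1 / (i.2 + 1)) (by positivity)
  -- the index filter
  set L : Filter (Finset M × ℕ) := (atTop : Filter (Finset M)) ×ˢ (atTop : Filter ℕ) with hL
  have : L.NeBot := by infer_instance
  obtain ⟨U, hU⟩ := Ultrafilter.exists_le L
  -- candidate functions with values in N
  set f : M → Finset M × ℕ → N := fun x i =>
    if h : x ∈ i.1 ∧ n0 ∈ i.1 then ⟨r i x, hr1 i x h.1⟩ else ⟨n0, hn0⟩ with hf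
  -- each f x lands in a compact ball
  have hball : ∀ x : M, ∀ i, f x i ∈ Metric.closedBall (⟨n0, hn0⟩ : N) (2 * dist x n0) := by
    intro x i
    simp only [Metric.mem_closedBall, hf]
    split_ifs with h
    · have hrn0 : r i n0 = n0 := hr2 i n0 h.2 hn0
      have := hr3 i x h.1 n0 h.2
      rw [hrn0] at this
      rw [Subtype.dist_eq]
      calc dist (r i x) n0 ≤ (1 + 1 / (i.2 + 1)) * dist x n0 := this
        _ ≤ 2 * dist x n0 := by
            apply mul_le_mul_of_nonneg_right _ dist_nonneg
            have : (1 : ℝ) / (i.2 + 1) ≤ 1 := by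
              rw [div_le_one (by positivity)]; linarith [Nat.cast_nonneg (α := ℝ) i.2]
            linarith
    · rw [Subtype.dist_eq]
      simp only [dist_self]
      positivity
  -- extract limits
  have hlim : ∀ x : M, ∃ a : N, Tendsto (f x) ↑U (nhds a) := by
    intro x
    obtain ⟨a, -, ha⟩ := (isCompact_closedBall (⟨n0, hn0⟩ : N) (2 * dist x n0)).ultrafilter_le_nhds
      (U.map (f x)) (by
        rw [Ultrafilter.coe_map, le_principal_iff, mem_map]
        exact univ_mem' (hball x))
    exact ⟨a, ha⟩
  choose a ha using hlim
  refine ⟨fun x => (a x : M), fun x => (a x).2, ?_, ?_⟩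
  · -- fixes points of N
    intro x hx
    have hev : ∀ᶠ i in L, f x i = (⟨x, hx⟩ : N) := by
      filter_upwards [(eventually_ge_atTop ({x, n0} : Finset M)).prod_inl
        (atTop : Filter ℕ)] with i hi
      have hxE : x ∈ i.1 := hi (by simp)
      have hn0E : n0 ∈ i.1 := hi (by simp)
      simp only [hf]
      rw [dif_pos (And.intro hxE hn0E)]
      exact Subtype.ext (hr2 i x hxE hx)
    have : Tendsto (f x) ↑U (nhds (⟨x, hx⟩ : N)) :=
      Tendsto.congr' (EventuallyEq.symm (hev.filter_mono hU)) tendsto_const_nhds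
    have := tendsto_nhds_unique (ha x) this
    exact congrArg Subtype.val this
  · -- 1-Lipschitz
    intro x y
    have hd : Tendsto (fun i => dist (f x i) (f y i)) ↑U (nhds (dist (a x) (a y))) :=
      (ha x).dist (ha y)
    have hbound : ∀ᶠ i in ↑U, dist (f x i) (f y i) ≤ (1 + 1 / (i.2 + 1)) * dist x y := by
      refine Eventually.filter_mono hU ?_
      filter_upwards [(eventually_ge_atTop ({x, y, n0} : Finset M)).prod_inl
        (atTop : Filter ℕ)] with i hi
      have hxE : x ∈ i.1 := hi (by simp)
      have hyE : y ∈ i.1 := hi (by simp)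
      have hn0E : n0 ∈ i.1 := hi (by simp)
      simp only [hf]
      rw [dif_pos (And.intro hxE hn0E), dif_pos (And.intro hyE hn0E), Subtype.dist_eq]
      exact hr3 i x hxE y hyE
    have htend : Tendsto (fun i : Finset M × ℕ => (1 + 1 / ((i.2 : ℝ) + 1)) * dist x y) ↑U
        (nhds (dist x y)) := by
      have h1 : Tendsto (fun n : ℕ => (1 + 1 / ((n : ℝ) + 1)) * dist x y) atTop
          (nhds ((1 + 0) * dist x y)) := by
        exact (Tendsto.add tendsto_const_nhds tendsto_one_div_add_atTop_nhds_zero_nat).mul_const _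
      have h2 : Tendsto (fun i : Finset M × ℕ => i.2) ↑U atTop :=
        (tendsto_snd).mono_left hU
      simpa [Function.comp_def] using h1.comp h2
    have := le_of_tendsto_of_tendsto hd htend hbound
    rw [Subtype.dist_eq] at this
    exact this
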